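/- Let G be a finite graph, k ≥ 1 an integer, and (T,bag) a tree decomposition of G in which every adhesion has size < k. If u and v are distinct vertices of G with flow*_G(u,v) ≥ k, then there is a node t ∈ V(T) with {u,v} ⊆ bag(t). -/

import Mathlib

open Finset SimpleGraph

variable {V : Type} [Fintype V] [DecidableEq V]

/-- `(T, bag)` is a tree decomposition of the graph `G`. -/
def IsTreeDecomp (G : SimpleGraph V) {W : Type} (T : SimpleGraph W)
    (bag : W → Finset V) : Prop :=
  T.IsTree ∧
  (∀ u v : V, G.Adj u v → ∃ t : W, u ∈ bag t ∧ v ∈ bag t) ∧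
  (∀ v : V, (T.induce {t : W | v ∈ bag t}).Connected)

/-- There is a family of `k` pairwise internally vertex-disjoint paths from `u` to `v` in
`G`, i.e. `flow*_G(u, v) ≥ k` (the edge `uv`, if present, counts as one such path). -/
def InternallyDisjointPaths (G : SimpleGraph V) (u v : V) (k : ℕ) : Prop :=
  ∃ P : Fin k → G.Walk u v,
    (∀ i, (P i).IsPath) ∧
    (∀ i j, i ≠ j → P i ≠ P j) ∧
    (∀ i j, i ≠ j → ∀ w : V, w ∈ (P i).support → w ∈ (P j).support → w = u ∨ w = v)

set_option linter.unusedSectionVars false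
set_option linter.unusedVariables false

private lemma reach_side {W : Type} {T : SimpleGraph W} (s t : W) {w e : W} (p : T.Walk w e) :
    ((T.deleteEdges {s(s,t)}).Reachable e s ∨ (T.deleteEdges {s(s,t)}).Reachable e t) →
    ((T.deleteEdges {s(s,t)}).Reachable w s ∨ (T.deleteEdges {s(s,t)}).Reachable w t) := by
  induction p with
  | nil => exact id
  | @cons a x b h q ih =>
    intro hb
    by_cases he : s(a, x) = s(s, t)
    · rcases Sym2.eq_iff.mp he with ⟨h1, h2⟩ | ⟨h1, h2⟩
      · exact Or.inl (h1 ▸ Reachable.refl a)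
      · exact Or.inr (h1 ▸ Reachable.refl a)
    · have h' : (T.deleteEdges {s(s,t)}).Adj a x := by
        rw [deleteEdges_adj]; exact ⟨h, by simpa using he⟩
      rcases ih hb with hr | hr
      · exact Or.inl (h'.reachable.trans hr)
      · exact Or.inr (h'.reachable.trans hr)

private lemma side_total {W : Type} {T : SimpleGraph W} (hc : T.Connected) (s t : W) (w : W) :
    (T.deleteEdges {s(s,t)}).Reachable w s ∨ (T.deleteEdges {s(s,t)}).Reachable w t := by
  obtain ⟨p⟩ := hc.preconnected w s
  exact reach_side s t p (Or.inl (Reachable.refl s))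

private lemma side_disj {W : Type} {T : SimpleGraph W} (ha : T.IsAcyclic) {s t : W}
    (hst : T.Adj s t) : ¬ (T.deleteEdges {s(s,t)}).Reachable s t :=
  (isBridge_iff).mp ((isAcyclic_iff_forall_adj_isBridge.mp ha) hst)

private lemma crossing {W : Type} {T : SimpleGraph W} (ha : T.IsAcyclic) {s t : W}
    (hst : T.Adj s t) {a b : W} (p : T.Walk a b) :
    (T.deleteEdges {s(s,t)}).Reachable a s → (T.deleteEdges {s(s,t)}).Reachable b t →
    s ∈ p.support ∧ t ∈ p.support := by
  induction p with
  | nil => exact fun h1 h2 => absurd (h1.symm.trans h2) (side_disj ha hst)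
  | @cons a x b h q ih =>
    intro has hbt
    by_cases hx : (T.deleteEdges {s(s,t)}).Reachable x s
    · obtain ⟨h1, h2⟩ := ih hx hbt
      exact ⟨by simp [Walk.support_cons, h1], by simp [Walk.support_cons, h2]⟩
    · have he : s(a, x) = s(s, t) := by
        by_contra he
        have h' : (T.deleteEdges {s(s,t)}).Adj x a := by
          rw [deleteEdges_adj]
          refine ⟨h.symm, ?_⟩
          intro hmem
          exact he (by rw [Sym2.eq_swap]; exact Set.mem_singleton_iff.mp hmem)
        exact hx (h'.reachable.trans has)
      rcases Sym2.eq_iff.mp he with ⟨h1, h2⟩ | ⟨h1, h2⟩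
      · constructor
        · rw [← h1]; exact Walk.start_mem_support _
        · rw [← h2]; simp [Walk.support_cons, q.start_mem_support]
      · exact absurd (h1 ▸ has).symm (side_disj ha hst)


/-- Selecting the separating edge on a path from the `u`-subtree to the `v`-subtree. -/
private lemma select_edge {W : Type} {T : SimpleGraph W} (bag : W → Finset V) (u v : V)
    (hno : ∀ w, ¬ (u ∈ bag w ∧ v ∈ bag w)) {a b : W} (p : T.Walk a b) (hp : p.IsPath)
    (hua : u ∈ bag a) (hvb : v ∈ bag b) :
    ∃ s t : W, T.Adj s t ∧ u ∈ bag s ∧ u ∉ bag t ∧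
      ∃ b' : W, v ∈ bag b' ∧ (T.deleteEdges {s(s,t)}).Reachable b' t := by
  induction p with
  | nil => exact absurd ⟨hua, hvb⟩ (hno _)
  | @cons a x b h q ih =>
    by_cases hux : u ∈ bag x
    · exact ih hp.of_cons hux hvb
    · refine ⟨a, x, h, hua, hux, b, hvb, ?_⟩
      have hnd : s(a, x) ∉ q.edges := by
        have := hp.edges_nodup
        rw [Walk.edges_cons] at this
        exact (List.nodup_cons.mp this).1
      exact ⟨(q.toDeleteEdge s(a,x) hnd).reverse⟩

/-- Any walk from outside `B` into `B` meets `A ∩ B`, given the edge condition. -/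
private lemma walk_meets {G : SimpleGraph V} (A B : V → Prop)
    (hedges : ∀ x y, G.Adj x y → (A x ∧ A y) ∨ (B x ∧ B y)) {a b : V} (p : G.Walk a b) :
    ¬ B a → B b → ∃ y ∈ p.support, A y ∧ B y := by
  induction p with
  | nil => exact fun h1 h2 => absurd h2 h1
  | @cons a x b h q ih =>
    intro hna hb
    by_cases hx : B x
    · refine ⟨x, by simp [Walk.support_cons, q.start_mem_support], ?_, hx⟩
      rcases hedges a x h with ⟨_, hAx⟩ | ⟨hBa, _⟩
      · exact hAx
      · exact absurd hBa hna
    · obtain ⟨y, hy1, hy2⟩ := ih hx hb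
      exact ⟨y, by simp [Walk.support_cons, hy1], hy2⟩

private lemma induced_reach_support {W : Type} {T : SimpleGraph W} {A : Set W}
    (hA : (T.induce A).Connected) {w w' : W} (hw : w ∈ A) (hw' : w' ∈ A) :
    ∃ p : T.Walk w w', ∀ z ∈ p.support, z ∈ A := by
  obtain ⟨q⟩ := hA.preconnected ⟨w, hw⟩ ⟨w', hw'⟩
  refine ⟨q.map (SimpleGraph.Embedding.induce A).toHom, ?_⟩
  intro z hz
  have hz2 : z ∈ List.map (SimpleGraph.Embedding.induce (G := T) A).toHom q.support := by
    rw [← Walk.support_map]; exact hz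
  obtain ⟨z', _, rfl⟩ := List.mem_map.mp hz2
  exact z'.2

/-- If `(T, bag)` is a tree decomposition of `G` whose every adhesion has size `< k`, and
`u ≠ v` are vertices with `flow*_G(u, v) ≥ k`, then some bag contains both `u` and `v`. -/
theorem highFlow_common_bag {W : Type} [Fintype W] (G : SimpleGraph V) (k : ℕ)
    (hk : 1 ≤ k) (T : SimpleGraph W) (bag : W → Finset V)
    (hTD : IsTreeDecomp G T bag)
    (hadh : ∀ a b : W, T.Adj a b → (bag a ∩ bag b).card < k)
    (u v : V) (huv : u ≠ v) (hflow : InternallyDisjointPaths G u v k) :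
    ∃ t : W, u ∈ bag t ∧ v ∈ bag t := by
  classical
  by_contra hcb
  have hno : ∀ w, ¬ (u ∈ bag w ∧ v ∈ bag w) := fun w h => hcb ⟨w, h⟩
  obtain ⟨hT, hGedge, hconn⟩ := hTD
  obtain ⟨⟨tu, htu⟩⟩ := (hconn u).nonempty
  obtain ⟨⟨tv, htv⟩⟩ := (hconn v).nonempty
  obtain ⟨p0⟩ := hT.isConnected.preconnected tu tv
  obtain ⟨s, t, hst, hus, hut, b', hvb', hreach⟩ :=
    select_edge bag u v hno p0.toPath.val p0.toPath.prop htu htv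
  have hac := hT.IsAcyclic
  have hsep : ∀ x : V,
      (∃ w, (T.deleteEdges {s(s,t)}).Reachable w s ∧ x ∈ bag w) →
      (∃ w, (T.deleteEdges {s(s,t)}).Reachable w t ∧ x ∈ bag w) →
      x ∈ bag s ∧ x ∈ bag t := by
    rintro x ⟨w, hws, hxw⟩ ⟨w', hwt, hxw'⟩
    obtain ⟨p, hp⟩ := induced_reach_support (hconn x) (show w ∈ _ from hxw)
      (show w' ∈ _ from hxw')
    have h2 := crossing hac hst p hws hwt
    exact ⟨hp s h2.1, hp t h2.2⟩
  have hedges : ∀ x y : V, G.Adj x y →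
      ((∃ w, (T.deleteEdges {s(s,t)}).Reachable w s ∧ x ∈ bag w) ∧
       (∃ w, (T.deleteEdges {s(s,t)}).Reachable w s ∧ y ∈ bag w)) ∨
      ((∃ w, (T.deleteEdges {s(s,t)}).Reachable w t ∧ x ∈ bag w) ∧
       (∃ w, (T.deleteEdges {s(s,t)}).Reachable w t ∧ y ∈ bag w)) := by
    intro x y hxy
    obtain ⟨w, hx, hy⟩ := hGedge x y hxy
    rcases side_total hT.isConnected s t w with h | h
    · exact Or.inl ⟨⟨w, h, hx⟩, ⟨w, h, hy⟩⟩
    · exact Or.inr ⟨⟨w, h, hx⟩, ⟨w, h, hy⟩⟩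
  have huA : ¬ (∃ w, (T.deleteEdges {s(s,t)}).Reachable w t ∧ u ∈ bag w) :=
    fun hB => hut (hsep u ⟨s, Reachable.refl s, hus⟩ hB).2
  have hvB : ∃ w, (T.deleteEdges {s(s,t)}).Reachable w t ∧ v ∈ bag w := ⟨b', hreach, hvb'⟩
  have hvA : ¬ (∃ w, (T.deleteEdges {s(s,t)}).Reachable w s ∧ v ∈ bag w) :=
    fun hA => hno s ⟨hus, (hsep v hA hvB).1⟩
  obtain ⟨P, hPpath, _, hPint⟩ := hflow
  have hmeet := fun i : Fin k => walk_meets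
    (fun x => ∃ w, (T.deleteEdges {s(s,t)}).Reachable w s ∧ x ∈ bag w)
    (fun x => ∃ w, (T.deleteEdges {s(s,t)}).Reachable w t ∧ x ∈ bag w)
    hedges (P i) huA hvB
  choose y hy h2 using hmeet
  have hymem : ∀ i, y i ∈ bag s ∩ bag t :=
    fun i => Finset.mem_inter.mpr (hsep _ (h2 i).1 (h2 i).2)
  have hyne : ∀ i j : Fin k, i ≠ j → y i ≠ y j := by
    intro i j hij hEq
    rcases hPint i j hij (y i) (hy i) (hEq ▸ hy j) with h | h
    · exact huA (h ▸ (h2 i).2)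
    · exact hvA (h ▸ (h2 i).1)
  have hcard : k ≤ (bag s ∩ bag t).card := by
    have := Finset.card_le_card_of_injOn (s := (Finset.univ : Finset (Fin k))) y (fun i _ => hymem i)
      (fun i _ j _ hEq => by by_contra hne; exact hyne i j hne hEq)
    simpa using this
  exact absurd (hadh s t hst) (not_lt.mpr hcard)
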